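/- arXiv:2402.08321 — 2 statements merged into one kernel-verified Lean document; each statement's English description precedes it below -/
import Mathlib

section
/- Fix x ∈ (0,1) and let φ(y) = -log y be the log-barrier function on (0,∞). Then for any a > -1/x, sup over y > 0 of [a(x - y) - D_φ(y,x)] equals ax - log(1 + ax). In particular, if a ≥ -1/(2x) this supremum is at most x²·a². -/
/-- Bregman divergence induced by the log-barrier `φ(y) = -log y`,
with `φ'(x) = -1/x`. -/
noncomputable def DphiLB (y x : ℝ) : ℝ :=
  -Real.log y - (-Real.log x) - (-(1 / x)) * (y - x)

theorem stab_log_barrier (x : ℝ) (hx : x ∈ Set.Ioo (0:ℝ) 1) (a : ℝ) (ha : -(1 / x) < a) :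
    IsLUB ((fun y : ℝ => a * (x - y) - DphiLB y x) '' Set.Ioi 0)
      (a * x - Real.log (1 + a * x)) ∧
    (-(1 / (2 * x)) ≤ a → a * x - Real.log (1 + a * x) ≤ x ^ 2 * a ^ 2) := by
  obtain ⟨hx0, hx1⟩ := hx
  set b : ℝ := a + 1 / x with hbdef
  have hb : 0 < b := by
    simp only [hbdef]; linarith
  have hbx : b * x = 1 + a * x := by
    rw [hbdef, add_mul, one_div_mul_cancel hx0.ne']; ring
  have hax : 0 < 1 + a * x := by rw [← hbx]; positivity
  constructor
  · constructor
    · -- upper bound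
      rintro v ⟨y, hy, rfl⟩
      have hy : (0:ℝ) < y := hy
      have hlog : Real.log (b * y) ≤ b * y - 1 :=
        Real.log_le_sub_one_of_pos (by positivity)
      rw [Real.log_mul hb.ne' hy.ne'] at hlog
      have hD : DphiLB y x = -Real.log y + Real.log x + (1 / x) * (y - x) := by
        simp [DphiLB]
      have h1x : (1 / x) * (y - x) = b * y - a * y - 1 := by
        rw [hbdef, mul_sub, one_div_mul_cancel hx0.ne']; ring
      have hlogbx : Real.log (1 + a * x) = Real.log b + Real.log x := by
        rw [← hbx, Real.log_mul hb.ne' hx0.ne']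
      simp only [hD, h1x, hlogbx]
      nlinarith [hlog]
    · -- value attained at y = b⁻¹
      rintro u hu
      have hmem : (fun y : ℝ => a * (x - y) - DphiLB y x) b⁻¹ ∈
          ((fun y : ℝ => a * (x - y) - DphiLB y x) '' Set.Ioi 0) :=
        Set.mem_image_of_mem _ (by simpa using inv_pos.mpr hb)
      have hval : (fun y : ℝ => a * (x - y) - DphiLB y x) b⁻¹
          = a * x - Real.log (1 + a * x) := by
        have hD : DphiLB b⁻¹ x = -Real.log b⁻¹ + Real.log x + (1 / x) * (b⁻¹ - x) := by
          simp [DphiLB]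
        have hlogbx : Real.log (1 + a * x) = Real.log b + Real.log x := by
          rw [← hbx, Real.log_mul hb.ne' hx0.ne']
        have key : a * b⁻¹ + (1 / x) * (b⁻¹ - x) = 0 := by
          have hxx : (1 / x) * x = 1 := one_div_mul_cancel hx0.ne'
          have h2 : a * b⁻¹ + (1 / x) * (b⁻¹ - x) = (a + 1 / x) * b⁻¹ - (1 / x) * x := by
            ring
          rw [h2, hxx, ← hbdef, mul_inv_cancel₀ hb.ne']
          ring
        simp only [hD, Real.log_inv, hlogbx]
        linarith [key]
      have := hu hmem
      rw [hval] at this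
      exact this
  · -- quadratic bound
    intro ha2
    set t : ℝ := a * x with htdef
    have ht1 : -1 < t := by
      have h := mul_lt_mul_of_pos_right ha hx0
      have hxx : -(1/x) * x = -1 := by field_simp
      rw [hxx] at h; exact h
    have ht2 : -(1/2) ≤ t := by
      have h := mul_le_mul_of_nonneg_right ha2 hx0.le
      have hxx : -(1 / (2 * x)) * x = -(1/2) := by field_simp
      rw [hxx] at h; exact h
    have hgoal : t - Real.log (1 + t) ≤ t ^ 2 := by
      have h1t : 0 < 1 + t := by linarith
      rcases le_or_gt 0 t with h0 | h0
      · -- t ≥ 0 : use log(1+t) ≥ t/(1+t)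
        have hlog : Real.log (1 + t)⁻¹ ≤ (1 + t)⁻¹ - 1 :=
          Real.log_le_sub_one_of_pos (by positivity)
        rw [Real.log_inv] at hlog
        have hinv : (1 + t)⁻¹ * (1 + t) = 1 := inv_mul_cancel₀ h1t.ne'
        nlinarith [hlog, sq_nonneg t]
      · -- -1/2 ≤ t < 0 : use exp(t²-t) ≥ 1 + (t²-t) + (t²-t)²/2
        have hz : 0 ≤ t ^ 2 - t := by nlinarith
        have hexp : 1 + (t ^ 2 - t) + (t ^ 2 - t) ^ 2 / 2 ≤ Real.exp (t ^ 2 - t) :=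
          Real.quadratic_le_exp_of_nonneg hz
        have hle : (1 + t)⁻¹ ≤ Real.exp (t ^ 2 - t) := by
          rw [inv_le_iff_one_le_mul₀ h1t]
          nlinarith [hexp]
        have hlog : Real.log (1 + t)⁻¹ ≤ t ^ 2 - t := by
          calc Real.log (1 + t)⁻¹ ≤ Real.log (Real.exp (t ^ 2 - t)) :=
                Real.log_le_log (by positivity) hle
            _ = t ^ 2 - t := Real.log_exp _
        rw [Real.log_inv] at hlog
        linarith
    have hx2 : x ^ 2 * a ^ 2 = t ^ 2 := by rw [htdef]; ring
    rw [hx2]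
    exact hgoal
end

section
/- Fix x ∈ (0,1) and let φ(y) = -log(1-y) be the complement log-barrier function on (-∞,1). Then for any a < 1/(1-x), sup over y ∈ (-∞,1) of [a(x - y) - D_φ(y,x)] equals -a(1-x) - log(1 - a(1-x)). In particular, if a ≤ 1/(2(1-x)) this supremum is at most (1-x)²·a². -/
/-- Bregman divergence induced by the complement log-barrier `φ(y) = -log(1-y)`,
with `φ'(x) = 1/(1-x)`. -/
noncomputable def DphiCLB (y x : ℝ) : ℝ :=
  -Real.log (1 - y) - (-Real.log (1 - x)) - (1 / (1 - x)) * (y - x)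

theorem stab_complement_log_barrier (x : ℝ) (hx : x ∈ Set.Ioo (0:ℝ) 1) (a : ℝ)
    (ha : a < 1 / (1 - x)) :
    IsLUB ((fun y : ℝ => a * (x - y) - DphiCLB y x) '' Set.Iio 1)
      (-(a * (1 - x)) - Real.log (1 - a * (1 - x))) ∧
    (a ≤ 1 / (2 * (1 - x)) →
      -(a * (1 - x)) - Real.log (1 - a * (1 - x)) ≤ (1 - x) ^ 2 * a ^ 2) := by
  obtain ⟨hx0, hx1⟩ := hx
  have hc : (0:ℝ) < 1 - x := by linarith
  have hac : a * (1 - x) < 1 := by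
    have := (lt_div_iff₀ hc).mp ha
    linarith
  have h1ac : (0:ℝ) < 1 - a * (1 - x) := by linarith
  constructor
  · constructor
    · rintro z ⟨y, hy, rfl⟩
      simp only [Set.mem_Iio] at hy
      have ht : (0:ℝ) < 1 - y := by linarith
      have hts : (0:ℝ) < (1 - x) / (1 - a * (1 - x)) := div_pos hc h1ac
      have hlog : Real.log ((1 - y) / ((1 - x) / (1 - a * (1 - x)))) ≤
          (1 - y) / ((1 - x) / (1 - a * (1 - x))) - 1 :=
        Real.log_le_sub_one_of_pos (div_pos ht hts)
      rw [Real.log_div ht.ne' hts.ne', Real.log_div hc.ne' h1ac.ne'] at hlog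
      have hkey : Real.log (1 - y) ≤ Real.log (1 - x) - Real.log (1 - a * (1 - x)) +
          (1 - y) * (1 - a * (1 - x)) / (1 - x) - 1 := by
        have : (1 - y) / ((1 - x) / (1 - a * (1 - x))) =
            (1 - y) * (1 - a * (1 - x)) / (1 - x) := by
          field_simp
        linarith [hlog, this ▸ hlog]
      simp only [DphiCLB]
      have h1 : (1 - y) * (1 - a * (1 - x)) / (1 - x) =
          (1 - y) * (1 - a * (1 - x)) * (1 / (1 - x)) := by ring
      have h2 : (1:ℝ) / (1 - x) * (1 - x) = 1 := by field_simp
      have halg : a * (x - y) + ((1 - y) * (1 - a * (1 - x)) / (1 - x) - 1) +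
          1 / (1 - x) * (y - x) = -(a * (1 - x)) := by
        field_simp
        ring
      linarith [hkey, halg]
    · intro b hb
      refine hb ⟨1 - (1 - x) / (1 - a * (1 - x)), ?_, ?_⟩
      · have : (0:ℝ) < (1 - x) / (1 - a * (1 - x)) := div_pos hc h1ac
        simp only [Set.mem_Iio]; linarith
      · simp only [DphiCLB]
        have h1 : 1 - (1 - (1 - x) / (1 - a * (1 - x))) = (1 - x) / (1 - a * (1 - x)) := by
          ring
        rw [h1, Real.log_div hc.ne' h1ac.ne']
        field_simp
        ring
  · intro ha2
    set u := a * (1 - x) with hu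
    have hu2 : u ≤ 1 / 2 := by
      have := (le_div_iff₀ (by linarith : (0:ℝ) < 2 * (1 - x))).mp ha2
      nlinarith
    have hgoal : -u - Real.log (1 - u) ≤ u ^ 2 → -u - Real.log (1 - u) ≤ (1 - x) ^ 2 * a ^ 2 := by
      intro h; calc -u - Real.log (1 - u) ≤ u ^ 2 := h
        _ = (1 - x) ^ 2 * a ^ 2 := by rw [hu]; ring
    apply hgoal
    rcases le_or_gt u 0 with hneg | hpos
    · have h1 : Real.log ((1 - u)⁻¹) ≤ (1 - u)⁻¹ - 1 :=
        Real.log_le_sub_one_of_pos (by positivity)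
      rw [Real.log_inv] at h1
      have hinv : (1 - u)⁻¹ - 1 = u / (1 - u) := by field_simp; ring
      rw [hinv] at h1
      have : u / (1 - u) ≤ u ^ 2 + u := by
        rw [div_le_iff₀ h1ac]
        nlinarith [mul_nonpos_of_nonpos_of_nonneg hneg (sq_nonneg u)]
      linarith
    · -- 0 < u ≤ 1/2 : show log(1-u) ≥ -u - u²
      have hexp : 1 + (u + u ^ 2) + (u + u ^ 2) ^ 2 / 2 ≤ Real.exp (u + u ^ 2) :=
        Real.quadratic_le_exp_of_nonneg (by positivity)
      have h2 : Real.exp (-(u + u ^ 2)) ≤ 1 - u := by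
        rw [Real.exp_neg, inv_le_comm₀ (Real.exp_pos _) h1ac]
        have hB : (1 - u)⁻¹ ≤ 1 + (u + u ^ 2) + (u + u ^ 2) ^ 2 / 2 := by
          rw [inv_eq_one_div, div_le_iff₀ h1ac]
          nlinarith [hpos, hu2]
        exact hB.trans hexp
      have := Real.log_le_log (Real.exp_pos _) h2
      rw [Real.log_exp] at this
      linarith
end
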